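/- Suppose κ is regular, κ < λ, and ℙ is a separative atomless κ-closed poset of cardinality λ which forces the existence of a surjection from κ onto λ. Then the Boolean completion of ℙ is isomorphic to the Boolean completion of the Levy collapse Col(κ,{λ}), i.e., ℙ is forcing equivalent to the poset of partial functions from κ to λ of size < κ. -/

import Mathlib

open Cardinal

universe u v

/-- `e : P → R` is a dense embedding of forcing notions: it preserves order and
compatibility, and its image is dense in `R`. -/
def DenseEmb {P : Type u} {R : Type v} [Preorder P] [Preorder R] (e : P → R) : Prop :=
  (∀ p q : P, p ≤ q → e p ≤ e q) ∧
  (∀ p q : P, (∃ r, r ≤ p ∧ r ≤ q) ↔ (∃ s, s ≤ e p ∧ s ≤ e q)) ∧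
  ∀ r : R, ∃ p : P, e p ≤ r

/-- Two forcing notions are forcing equivalent (have isomorphic Boolean completions
`ro(P) ≅ ro(Q)`) iff they both embed densely into a common forcing notion. -/
def ForcingEquiv (P : Type u) (Q : Type v) [Preorder P] [Preorder Q] : Prop :=
  ∃ (R : Type (max u v)) (pr : Preorder R) (e₁ : P → R) (e₂ : Q → R),
    @DenseEmb P R _ pr e₁ ∧ @DenseEmb Q R _ pr e₂

/-- `e : P → R` is a complete embedding of forcing notions: it preserves order and
compatibility, and every `r ∈ R` has a reduction in `P`. -/
def CompleteEmb {P : Type u} {R : Type v} [Preorder P] [Preorder R] (e : P → R) : Prop :=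
  (∀ p q : P, p ≤ q → e p ≤ e q) ∧
  (∀ p q : P, (∃ r, r ≤ p ∧ r ≤ q) ↔ (∃ s, s ≤ e p ∧ s ≤ e q)) ∧
  ∀ r : R, ∃ p : P, ∀ p' : P, p' ≤ p → ∃ s, s ≤ e p' ∧ s ≤ r

/-- `P` is `κ`-closed: every descending sequence of length `< κ` has a lower bound. -/
def KClosed (P : Type u) [Preorder P] (κ : Cardinal.{0}) : Prop :=
  ∀ o : Ordinal, o < κ.ord → ∀ f : Ordinal → P,
    (∀ α β : Ordinal, α ≤ β → β < o → f β ≤ f α) → ∃ b : P, ∀ α < o, b ≤ f α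

/-- `P` is separative. -/
def Separative (P : Type u) [Preorder P] : Prop :=
  ∀ p q : P, ¬ p ≤ q → ∃ r, r ≤ p ∧ ¬∃ s, s ≤ r ∧ s ≤ q

/-- `P` is atomless. -/
def Atomless (P : Type u) [Preorder P] : Prop :=
  ∀ p : P, ∃ q r, q ≤ p ∧ r ≤ p ∧ ¬∃ s, s ≤ q ∧ s ≤ r

/-- `Col(κ,{λ})`: partial functions `κ ⇀ λ` of size `< κ`, as functional sets of pairs of
ordinals, ordered by reverse inclusion. -/
def Col (κ l : Cardinal.{0}) : Type 1 :=
  {f : Set (Ordinal × Ordinal) //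
    (∀ p ∈ f, p.1 < κ.ord ∧ p.2 < l.ord) ∧
    (∀ p ∈ f, ∀ q ∈ f, p.1 = q.1 → p.2 = q.2) ∧
    Cardinal.mk ↥f < Cardinal.lift.{1} κ}

instance (κ l : Cardinal.{0}) : Preorder (Col κ l) where
  le f g := g.1 ⊆ f.1
  le_refl f := Set.Subset.rfl
  le_trans f g h h₁ h₂ := fun x hx => h₁ (h₂ hx)

/-- The Levy collapse `Col(κ,λ)`: partial functions `p : λ × κ ⇀ λ` with `|dom p| < κ` and
`p(α,ξ) ∈ α`, ordered by reverse inclusion. -/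
def Levy (κ l : Cardinal.{0}) : Type 1 :=
  {f : Set ((Ordinal × Ordinal) × Ordinal) //
    (∀ p ∈ f, p.1.1 < l.ord ∧ p.1.2 < κ.ord ∧ p.2 < p.1.1) ∧
    (∀ p ∈ f, ∀ q ∈ f, p.1 = q.1 → p.2 = q.2) ∧
    Cardinal.mk ↥f < Cardinal.lift.{1} κ}

instance (κ l : Cardinal.{0}) : Preorder (Levy κ l) where
  le f g := g.1 ⊆ f.1
  le_refl f := Set.Subset.rfl
  le_trans f g h h₁ h₂ := fun x hx => h₁ (h₂ hx)



open Cardinal Set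

namespace CollapseAbs

variable {P : Type 1} [Preorder P]

/-- regularization operator on downward closed sets -/
def reg (U : Set P) : Set P := {p | ∀ q, q ≤ p → ∃ r, r ≤ q ∧ r ∈ U}

theorem reg_mono {U V : Set P} (h : U ⊆ V) : reg U ⊆ reg V := by
  intro p hp q hq
  obtain ⟨r, hr1, hr2⟩ := hp q hq
  exact ⟨r, hr1, h hr2⟩

theorem reg_dc {U : Set P} {p q : P} (hq : q ≤ p) (hp : p ∈ reg U) : q ∈ reg U :=
  fun r hr => hp r (hr.trans hq)

theorem subset_reg {U : Set P} (hU : ∀ {p q : P}, q ≤ p → p ∈ U → q ∈ U) : U ⊆ reg U :=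
  fun p hp q hq => ⟨q, le_refl q, hU hq hp⟩

theorem reg_reg (U : Set P) : reg (reg U) = reg U := by
  apply Set.Subset.antisymm
  · intro p hp q hq
    obtain ⟨r, hr1, hr2⟩ := hp q hq
    obtain ⟨r', h1, h2⟩ := hr2 r (le_refl r)
    exact ⟨r', h1.trans hr1, h2⟩
  · exact subset_reg (fun h hp => reg_dc h hp)

theorem reg_univ : reg (Set.univ : Set P) = Set.univ := by
  apply Set.Subset.antisymm (Set.subset_univ _)
  exact subset_reg (fun _ _ => trivial)

theorem mem_of_reg_eq {S : Set P} (hS : reg S = S) {p q : P} (hq : q ≤ p) (hp : p ∈ S) :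
    q ∈ S := by
  rw [← hS] at hp ⊢
  exact reg_dc hq hp

theorem reg_Iic (hsep : Separative P) (a : P) : reg {q : P | q ≤ a} = {q : P | q ≤ a} := by
  apply Set.Subset.antisymm
  · intro p hp
    by_contra hpa
    obtain ⟨r, hr1, hr2⟩ := hsep p a hpa
    obtain ⟨r', h1, h2⟩ := hp r hr1
    exact hr2 ⟨r', h1, h2⟩
  · exact subset_reg (fun h hp => le_trans h hp)

section Main

variable {κ l : Cardinal.{0}}
variable (g : P → Ordinal.{0} → Ordinal.{0} → Prop)

/-- the set of values forced at coordinate `α` below `x₀` -/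
def Valset (l : Cardinal.{0}) (x₀ : P) (α : Ordinal) : Set Ordinal :=
  {ξ | ξ < l.ord ∧ ∃ q, q ≤ x₀ ∧ g q α ξ}

theorem exists_maximal_antichain (D : Set P) :
    ∃ M, M ⊆ D ∧ (M.Pairwise fun a b => ¬∃ r, r ≤ a ∧ r ≤ b) ∧
      ∀ N, (N ⊆ D ∧ (N.Pairwise fun a b => ¬∃ r, r ≤ a ∧ r ≤ b)) → M ⊆ N → N = M := by
  have hzorn : ∀ c ⊆ {M : Set P | M ⊆ D ∧ M.Pairwise fun a b => ¬∃ r, r ≤ a ∧ r ≤ b},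
      IsChain (· ⊆ ·) c → ∃ ub ∈ {M : Set P | M ⊆ D ∧ M.Pairwise fun a b => ¬∃ r, r ≤ a ∧ r ≤ b},
        ∀ s ∈ c, s ⊆ ub := by
    intro c hc hchain
    refine ⟨⋃₀ c, ⟨?_, ?_⟩, fun s hs => subset_sUnion_of_mem hs⟩
    · exact sUnion_subset fun s hs => (hc hs).1
    · intro a ha b hb hab
      obtain ⟨sa, hsa, ha⟩ := ha
      obtain ⟨sb, hsb, hb⟩ := hb
      rcases hchain.total hsa hsb with h | h
      · exact (hc hsb).2 (h ha) hb hab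
      · exact (hc hsa).2 ha (h hb) hab
  obtain ⟨M, hM⟩ := zorn_subset _ hzorn
  exact ⟨M, hM.1.1, hM.1.2, fun N hN hMN => hM.eq_of_superset hN hMN⟩

theorem deciders_antichain
    (hgmono : ∀ {p q : P} {α β : Ordinal}, q ≤ p → g p α β → g q α β)
    (hgfun : ∀ p α β β', g p α β → g p α β' → β = β')
    (l : Cardinal.{0}) (x₀ : P) (α : Ordinal) :
    ∃ W : Set P, (∀ w ∈ W, w ≤ x₀) ∧ (W.Pairwise fun a b => ¬∃ r, r ≤ a ∧ r ≤ b) ∧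
      #(Valset g l x₀ α) ≤ #W := by
  classical
  obtain ⟨W, hWD, hWpair, hWmax⟩ :=
    exists_maximal_antichain (D := {q : P | q ≤ x₀ ∧ ∃ ξ, g q α ξ})
  refine ⟨W, fun w hw => (hWD hw).1, hWpair, ?_⟩
  -- every element of Valset gives a compatible member of W
  have key : ∀ ξ : ↥(Valset g l x₀ α), ∃ w ∈ W, ∃ r, r ≤ w ∧ g r α ξ.1 := by
    rintro ⟨ξ, hξl, q, hqx, hqg⟩
    by_contra hno
    push_neg at hno
    have hqD : q ∈ {q : P | q ≤ x₀ ∧ ∃ ξ, g q α ξ} := ⟨hqx, ξ, hqg⟩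
    have hqW : q ∉ W := by
      intro hqW
      exact hno q hqW q (le_refl q) hqg
    have hq_incomp : ∀ w ∈ W, ¬∃ r, r ≤ q ∧ r ≤ w := by
      intro w hw ⟨r, hr1, hr2⟩
      exact hno w hw r hr2 (hgmono hr1 hqg)
    have : insert q W = W := by
      apply hWmax
      · constructor
        · exact insert_subset hqD hWD
        · intro a ha b hb hab
          rcases ha with rfl | ha
          · rcases hb with rfl | hb
            · exact absurd rfl hab
            · exact hq_incomp b hb
          · rcases hb with rfl | hb
            · intro ⟨r, hr1, hr2⟩
              exact hq_incomp a ha ⟨r, hr2, hr1⟩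
            · exact hWpair ha hb hab
      · exact subset_insert _ _
    exact hqW (this ▸ mem_insert q W)
  choose w hwW r hrw hrg using key
  have hinj : Function.Injective (fun ξ => (⟨w ξ, hwW ξ⟩ : ↥W)) := by
    intro ξ ξ' h
    simp only [Subtype.mk.injEq] at h
    obtain ⟨ξw, hξw⟩ := (hWD (hwW ξ)).2
    have h1 : ξ.1 = ξw := hgfun (r ξ) α _ _ (hrg ξ) (hgmono (hrw ξ) hξw)
    have h2 : ξ'.1 = ξw := by
      exact hgfun (r ξ') α _ _ (hrg ξ') (hgmono (hrw ξ') (h ▸ hξw))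
    exact Subtype.ext (h1.trans h2.symm)
  exact Cardinal.mk_le_of_injective hinj


theorem val_not_small
    (hκ : κ.IsRegular) (hκl : κ < l)
    (hgsurj : ∀ p : P, ∀ β < l.ord, ∃ q ≤ p, ∃ α < κ.ord, g q α β)
    (x₀ : P) (ν : Cardinal.{1}) (hν : ν < Cardinal.lift.{1} l) :
    ¬ ∀ α, α < κ.ord → #(Valset g l x₀ α) ≤ ν := by
  intro hall
  have hcover : ⋃ α ∈ Set.Iio κ.ord, Valset g l x₀ α = Set.Iio l.ord := by
    apply Set.Subset.antisymm
    · intro ξ hξ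
      simp only [Set.mem_iUnion] at hξ
      obtain ⟨α, _, hm⟩ := hξ
      exact hm.1
    · intro ξ hξ
      obtain ⟨q, hq, α, hα, hg⟩ := hgsurj x₀ ξ hξ
      simp only [Set.mem_iUnion]
      exact ⟨α, hα, hξ, q, hq, hg⟩
  have hIiol : #(Set.Iio l.ord) = Cardinal.lift.{1} l := by
    rw [Ordinal.mk_Iio_ordinal, Cardinal.card_ord]
  have hIioκ : #(Set.Iio κ.ord) = Cardinal.lift.{1} κ := by
    rw [Ordinal.mk_Iio_ordinal, Cardinal.card_ord]
  haveI : Nonempty ↥(Set.Iio κ.ord) := ⟨⟨0, hκ.ord_pos⟩⟩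
  have hsup : ⨆ x : ↥(Set.Iio κ.ord), #(Valset g l x₀ x.1) ≤ ν :=
    ciSup_le fun x => hall x.1 x.2
  have hle : Cardinal.lift.{1} l ≤ Cardinal.lift.{1} κ * ν := by
    calc Cardinal.lift.{1} l = #(Set.Iio l.ord) := hIiol.symm
    _ = #(⋃ α ∈ Set.Iio κ.ord, Valset g l x₀ α) := by rw [hcover]
    _ ≤ #(Set.Iio κ.ord) * ⨆ x : ↥(Set.Iio κ.ord), #(Valset g l x₀ x.1) :=
        Cardinal.mk_biUnion_le _ _
    _ ≤ Cardinal.lift.{1} κ * ν := by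
        rw [hIioκ]; exact mul_le_mul' le_rfl hsup
  have hmax : Cardinal.lift.{1} κ * ν ≤ max (max (Cardinal.lift.{1} κ) ν) ℵ₀ :=
    Cardinal.mul_le_max _ _
  have hlt : max (max (Cardinal.lift.{1} κ) ν) ℵ₀ < Cardinal.lift.{1} l := by
    have h1 : Cardinal.lift.{1} κ < Cardinal.lift.{1} l := Cardinal.lift_lt.mpr hκl
    have h2 : (ℵ₀ : Cardinal.{1}) ≤ Cardinal.lift.{1} κ := by
      exact Cardinal.aleph0_le_lift.mpr hκ.aleph0_le
    exact max_lt (max_lt h1 hν) (h2.trans_lt h1)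
  exact absurd (hle.trans hmax) (not_le.mpr hlt)

theorem S1
    (hκ : κ.IsRegular) (hκl : κ < l)
    (hgmono : ∀ {p q : P} {α β : Ordinal}, q ≤ p → g p α β → g q α β)
    (hgfun : ∀ p α β β', g p α β → g p α β' → β = β')
    (hgsurj : ∀ p : P, ∀ β < l.ord, ∃ q ≤ p, ∃ α < κ.ord, g q α β)
    (x₀ : P) (ν : Cardinal.{1}) (hν : ν < Cardinal.lift.{1} l) :
    ∃ W : Set P, (∀ w ∈ W, w ≤ x₀) ∧ (W.Pairwise fun a b => ¬∃ r, r ≤ a ∧ r ≤ b) ∧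
      ν < #W := by
  have := val_not_small g hκ hκl hgsurj x₀ ν hν
  push_neg at this
  obtain ⟨α, hα, hbig⟩ := this
  obtain ⟨W, h1, h2, h3⟩ := deciders_antichain g hgmono hgfun l x₀ α
  exact ⟨W, h1, h2, lt_of_lt_of_le hbig h3⟩

theorem indexed_of_set (x₀ : P) (W : Set P)
    (hle : ∀ w ∈ W, w ≤ x₀) (hpair : W.Pairwise fun a b => ¬∃ r, r ≤ a ∧ r ≤ b)
    (hcard : Cardinal.lift.{1} l ≤ #W) :
    ∃ c : Ordinal → P, (∀ β < l.ord, c β ≤ x₀) ∧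
      (∀ β β', β < l.ord → β' < l.ord → β ≠ β' → ¬∃ r, r ≤ c β ∧ r ≤ c β') := by
  classical
  have hIiol : #(Set.Iio l.ord) = Cardinal.lift.{1} l := by
    rw [Ordinal.mk_Iio_ordinal, Cardinal.card_ord]
  have : #(Set.Iio l.ord) ≤ #W := hIiol ▸ hcard
  obtain ⟨e⟩ := (Cardinal.le_def _ _).mp this
  refine ⟨fun β => if h : β < l.ord then (e ⟨β, h⟩).1 else x₀, ?_, ?_⟩
  · intro β hβ
    simp only [dif_pos hβ]
    exact hle _ (e ⟨β, hβ⟩).2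
  · intro β β' hβ hβ' hne
    simp only [dif_pos hβ, dif_pos hβ']
    have hnee : (e ⟨β, hβ⟩ : ↥W).1 ≠ (e ⟨β', hβ'⟩ : ↥W).1 := by
      intro h
      apply hne
      have := e.injective (Subtype.ext h)
      exact congrArg Subtype.val this
    exact hpair (e ⟨β, hβ⟩).2 (e ⟨β', hβ'⟩).2 hnee

theorem exists_lord_antichain
    (hκ : κ.IsRegular) (hκl : κ < l)
    (hgmono : ∀ {p q : P} {α β : Ordinal}, q ≤ p → g p α β → g q α β)
    (hgfun : ∀ p α β β', g p α β → g p α β' → β = β')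
    (hgsurj : ∀ p : P, ∀ β < l.ord, ∃ q ≤ p, ∃ α < κ.ord, g q α β)
    (x₀ : P) :
    ∃ c : Ordinal → P, (∀ β < l.ord, c β ≤ x₀) ∧
      (∀ β β', β < l.ord → β' < l.ord → β ≠ β' → ¬∃ r, r ≤ c β ∧ r ≤ c β') := by
  classical
  rcases lt_or_ge κ l.ord.cof with hcof | hcof
  · -- some coordinate already carries l many values
    have hbig : ∃ α, α < κ.ord ∧ Cardinal.lift.{1} l ≤ #(Valset g l x₀ α) := by
      by_contra hno
      push_neg at hno
      -- all values sets are small; bound them uniformly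
      have hsmall : ∀ i : κ.ord.ToType, ∃ ν' < l,
          Cardinal.lift.{1} ν' = #(Valset g l x₀ (((Ordinal.ToType.mk (o := κ.ord))).symm i).1) := by
        intro i
        exact Cardinal.lt_lift_iff.mp
          (hno _ (((Ordinal.ToType.mk (o := κ.ord))).symm i).2)
      choose ν hνl hνe using hsmall
      have hικ : #(κ.ord.ToType) = κ := by rw [Cardinal.mk_toType, Cardinal.card_ord]
      have hsup : (⨆ i, (ν i).ord) < l.ord :=
        Ordinal.iSup_lt_ord (by rw [hικ]; exact hcof)
          (fun i => Cardinal.ord_lt_ord.mpr (hνl i))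
      set X := (⨆ i, (ν i).ord).card with hXdef
      have hX : X < l := Cardinal.lt_ord.mp hsup
      have hineq : ∀ α, α < κ.ord → #(Valset g l x₀ α) ≤ Cardinal.lift.{1} X := by
        intro α hα
        set i := (Ordinal.ToType.mk (o := κ.ord)) ⟨α, hα⟩ with hi
        have hsymm : (((Ordinal.ToType.mk (o := κ.ord))).symm i).1 = α := by
          rw [hi, OrderIso.symm_apply_apply]
        have : #(Valset g l x₀ α) = Cardinal.lift.{1} (ν i) := by
          rw [← hsymm]; exact (hνe i).symm
        rw [this]
        apply Cardinal.lift_le.mpr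
        have : (ν i).ord ≤ ⨆ i, (ν i).ord :=
          le_ciSup (Ordinal.bddAbove_range _) i
        have := Ordinal.card_le_card this
        rwa [Cardinal.card_ord] at this
      exact val_not_small g hκ hκl hgsurj x₀ (Cardinal.lift.{1} X)
        (Cardinal.lift_lt.mpr hX) hineq
    obtain ⟨α, hα, hbig⟩ := hbig
    obtain ⟨W, h1, h2, h3⟩ := deciders_antichain g hgmono hgfun l x₀ α
    exact indexed_of_set x₀ W h1 h2 (hbig.trans h3)
  · -- cofinality at most κ : l is singular, glue antichains along a cofinal sequence
    have hlim : ∀ μ, μ < l → Order.succ μ < l := by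
      intro μ hμ
      by_contra hcon
      push_neg at hcon
      have heq : l = Order.succ μ := le_antisymm hcon (Order.succ_le_of_lt hμ)
      have hμκ : κ ≤ μ := Order.lt_succ_iff.mp (heq ▸ hκl)
      have hreg : (Order.succ μ).IsRegular :=
        Cardinal.isRegular_succ (hκ.aleph0_le.trans hμκ)
      have : l.ord.cof = l := by rw [heq]; exact hreg.cof_eq
      rw [this] at hcof
      exact absurd hκl (not_lt.mpr hcof)
    obtain ⟨ι, fseq, hlsub, hι⟩ := Ordinal.exists_lsub_cof l.ord
    obtain ⟨Wb, hb1, hb2, hb3⟩ := S1 g hκ hκl hgmono hgfun hgsurj x₀ (Cardinal.lift.{1} κ)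
      (Cardinal.lift_lt.mpr hκl)
    have hemb : Nonempty (ι ↪ ↥Wb) := by
      apply Cardinal.lift_mk_le'.mp
      rw [Cardinal.lift_id']
      calc Cardinal.lift.{1} #ι = Cardinal.lift.{1} l.ord.cof := by rw [hι]
      _ ≤ Cardinal.lift.{1} κ := Cardinal.lift_le.mpr hcof
      _ ≤ #Wb := hb3.le
    obtain ⟨b⟩ := hemb
    have hWfam : ∀ i : ι, ∃ Wi : Set P, (∀ w ∈ Wi, w ≤ (b i).1) ∧
        (Wi.Pairwise fun a b => ¬∃ r, r ≤ a ∧ r ≤ b) ∧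
        Cardinal.lift.{1} (fseq i).card < #Wi := by
      intro i
      apply S1 g hκ hκl hgmono hgfun hgsurj
      have : fseq i < l.ord := by rw [← hlsub]; exact Ordinal.lt_lsub fseq i
      exact Cardinal.lift_lt.mpr (Cardinal.lt_ord.mp this)
    choose Wf hW1 hW2 hW3 using hWfam
    set C := ⋃ i, Wf i with hC
    have hCx : ∀ w ∈ C, w ≤ x₀ := by
      intro w hw
      obtain ⟨i, hi⟩ : ∃ i, w ∈ Wf i := by simpa [hC] using hw
      exact (hW1 i w hi).trans (hb1 _ (b i).2)
    have hCpair : C.Pairwise fun a b => ¬∃ r, r ≤ a ∧ r ≤ b := by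
      intro a ha a' ha' hne
      obtain ⟨i, hi⟩ : ∃ i, a ∈ Wf i := by simpa [hC] using ha
      obtain ⟨j, hj⟩ : ∃ j, a' ∈ Wf j := by simpa [hC] using ha'
      by_cases hij : i = j
      · subst hij; exact hW2 i hi hj hne
      · intro ⟨r, hr1, hr2⟩
        have hbne : (b i).1 ≠ (b j).1 := fun h => hij (b.injective (Subtype.ext h))
        exact hb2 (b i).2 (b j).2 hbne ⟨r, hr1.trans (hW1 i a hi), hr2.trans (hW1 j a' hj)⟩
    have hCcard : Cardinal.lift.{1} l ≤ #C := by
      by_contra hcon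
      push_neg at hcon
      obtain ⟨μ₀, hμ₀l, hμ₀e⟩ := Cardinal.lt_lift_iff.mp hcon
      have hex : ∃ i, μ₀.ord ≤ fseq i := by
        apply Ordinal.lt_lsub_iff.mp
        rw [hlsub]
        exact Cardinal.ord_lt_ord.mpr hμ₀l
      obtain ⟨i, hi⟩ := hex
      have h1 : μ₀ ≤ (fseq i).card := by
        have := Ordinal.card_le_card hi
        rwa [Cardinal.card_ord] at this
      have hlt : Cardinal.lift.{1} μ₀ < #C :=
        lt_of_le_of_lt (Cardinal.lift_le.mpr h1)
          (lt_of_lt_of_le (hW3 i) (Cardinal.mk_le_mk_of_subset (Set.subset_iUnion Wf i)))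
      rw [hμ₀e] at hlt
      exact lt_irrefl _ hlt
    exact indexed_of_set x₀ C hCx hCpair hCcard

section WithNE

variable [Nonempty P] (enum : Ordinal.{0} → P)

/-- property of a good antichain system below `S` at level `γ` -/
def AProp (l : Cardinal.{0}) (S : Set P) (γ : Ordinal) (A : Ordinal → P) : Prop :=
  (∀ β, A β ∈ S ∧ ∃ ξ, ξ < l.ord ∧ g (A β) γ ξ ∧
      (A β ≤ enum ξ ∨ ¬ ∃ r, r ≤ A β ∧ r ≤ enum ξ)) ∧
  (∀ β β', β < l.ord → β' < l.ord → β ≠ β' → ¬ ∃ r, r ≤ A β ∧ r ≤ A β') ∧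
  (∀ q ∈ S, ∃ β, β < l.ord ∧ ∃ r, r ≤ q ∧ r ≤ A β)

theorem AProp_exists
    (hκ : κ.IsRegular) (hκl : κ < l)
    (hcard : Cardinal.mk P = Cardinal.lift.{1} l)
    (hgmono : ∀ {p q : P} {α β : Ordinal}, q ≤ p → g p α β → g q α β)
    (hgfun : ∀ p α β β', g p α β → g p α β' → β = β')
    (hgtotal : ∀ p : P, ∀ α < κ.ord, ∃ q ≤ p, ∃ β < l.ord, g q α β)
    (hgsurj : ∀ p : P, ∀ β < l.ord, ∃ q ≤ p, ∃ α < κ.ord, g q α β)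
    (henum : ∀ p : P, ∃ ξ, ξ < l.ord ∧ enum ξ = p)
    (S : Set P) (hSne : S.Nonempty) (hSreg : reg S = S) (γ : Ordinal) (hγ : γ < κ.ord) :
    ∃ A, AProp g enum l S γ A := by
  classical
  have hl0 : (0 : Ordinal) < l.ord := by
    have : (0 : Cardinal) < l := lt_of_lt_of_le hκ.pos hκl.le
    rw [← Cardinal.ord_zero]
    exact Cardinal.ord_lt_ord.mpr this
  have hdc : ∀ {p q : P}, q ≤ p → p ∈ S → q ∈ S := fun h hp => mem_of_reg_eq hSreg h hp
  set D := {a : P | a ∈ S ∧ ∃ ξ, ξ < l.ord ∧ g a γ ξ ∧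
      (a ≤ enum ξ ∨ ¬ ∃ r, r ≤ a ∧ r ≤ enum ξ)} with hD
  have hDdense : ∀ q ∈ S, ∃ a, a ≤ q ∧ a ∈ D := by
    intro q hq
    obtain ⟨q₁, hq₁, ξ, hξ, hgq₁⟩ := hgtotal q γ hγ
    by_cases hcomp : ∃ r, r ≤ q₁ ∧ r ≤ enum ξ
    · obtain ⟨r, hr1, hr2⟩ := hcomp
      exact ⟨r, hr1.trans hq₁, hdc (hr1.trans hq₁) hq, ξ, hξ, hgmono hr1 hgq₁, Or.inl hr2⟩
    · exact ⟨q₁, hq₁, hdc hq₁ hq, ξ, hξ, hgq₁, Or.inr hcomp⟩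
  obtain ⟨x₀, hx₀⟩ := hSne
  obtain ⟨c, hc1, hc2⟩ := exists_lord_antichain g hκ hκl hgmono hgfun hgsurj x₀
  have hdex : ∀ β : Ordinal, ∃ dd : P, β < l.ord → (dd ≤ c β ∧ dd ∈ D) := by
    intro β
    by_cases h : β < l.ord
    · obtain ⟨a, ha1, ha2⟩ := hDdense (c β) (hdc (hc1 β h) hx₀)
      exact ⟨a, fun _ => ⟨ha1, ha2⟩⟩
    · exact ⟨x₀, fun hh => absurd hh h⟩
  choose d hd using hdex
  set M₀ := {p : P | ∃ β, β < l.ord ∧ d β = p} with hM₀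
  have hdinc : ∀ β β', β < l.ord → β' < l.ord → β ≠ β' → ¬∃ r, r ≤ d β ∧ r ≤ d β' := by
    intro β β' hβ hβ' hne ⟨r, h1, h2⟩
    exact hc2 β β' hβ hβ' hne ⟨r, h1.trans (hd β hβ).1, h2.trans (hd β' hβ').1⟩
  have hM₀mem : M₀ ∈ {M : Set P | M ⊆ D ∧ M.Pairwise fun a b => ¬∃ r, r ≤ a ∧ r ≤ b} := by
    constructor
    · rintro p ⟨β, hβ, rfl⟩
      exact (hd β hβ).2
    · rintro p ⟨β, hβ, rfl⟩ p' ⟨β', hβ', rfl⟩ hne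
      have hbne : β ≠ β' := fun h => hne (h ▸ rfl)
      exact hdinc β β' hβ hβ' hbne
  have hzorn : ∀ c' ⊆ {M : Set P | M ⊆ D ∧ M.Pairwise fun a b => ¬∃ r, r ≤ a ∧ r ≤ b},
      IsChain (· ⊆ ·) c' → c'.Nonempty →
      ∃ ub ∈ {M : Set P | M ⊆ D ∧ M.Pairwise fun a b => ¬∃ r, r ≤ a ∧ r ≤ b},
        ∀ s ∈ c', s ⊆ ub := by
    intro c' hc hchain _
    refine ⟨⋃₀ c', ⟨?_, ?_⟩, fun s hs => subset_sUnion_of_mem hs⟩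
    · exact sUnion_subset fun s hs => (hc hs).1
    · intro a ha b hb hab
      obtain ⟨sa, hsa, ha⟩ := ha
      obtain ⟨sb, hsb, hb⟩ := hb
      rcases hchain.total hsa hsb with h | h
      · exact (hc hsb).2 (h ha) hb hab
      · exact (hc hsa).2 ha (h hb) hab
  obtain ⟨M, hM₀M, hM⟩ := zorn_subset_nonempty _ hzorn M₀ hM₀mem
  have hMD : M ⊆ D := hM.1.1
  have hMpair := hM.1.2
  have hIiol : #(Set.Iio l.ord) = Cardinal.lift.{1} l := by
    rw [Ordinal.mk_Iio_ordinal, Cardinal.card_ord]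
  have hMcard : #(Set.Iio l.ord) = #M := by
    apply le_antisymm
    · apply Cardinal.mk_le_of_injective
        (f := fun x : ↥(Set.Iio l.ord) => (⟨d x.1, hM₀M ⟨x.1, x.2, rfl⟩⟩ : ↥M))
      intro x y h
      simp only [Subtype.mk.injEq] at h
      by_contra hne
      have hxyne : x.1 ≠ y.1 := fun hh => hne (Subtype.ext hh)
      exact hdinc x.1 y.1 x.2 y.2 hxyne ⟨d x.1, le_refl _, h ▸ le_refl _⟩
    · rw [hIiol]
      exact (Cardinal.mk_subtype_le _).trans_eq hcard
  obtain ⟨E2⟩ := Cardinal.eq.mp hMcard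
  set A : Ordinal → P := fun β => if h : β < l.ord then (E2 ⟨β, h⟩).1
    else (E2 ⟨0, hl0⟩).1 with hA
  have hAM : ∀ β, A β ∈ M := by
    intro β
    by_cases h : β < l.ord
    · rw [hA]; simp only [dif_pos h]; exact (E2 ⟨β, h⟩).2
    · rw [hA]; simp only [dif_neg h]; exact (E2 ⟨0, hl0⟩).2
  refine ⟨A, fun β => ⟨(hMD (hAM β)).1, (hMD (hAM β)).2⟩, ?_, ?_⟩
  · intro β β' hβ hβ' hne
    have h1 : A β = (E2 ⟨β, hβ⟩).1 := by rw [hA]; simp only [dif_pos hβ]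
    have h2 : A β' = (E2 ⟨β', hβ'⟩).1 := by rw [hA]; simp only [dif_pos hβ']
    rw [h1, h2]
    apply hMpair (E2 ⟨β, hβ⟩).2 (E2 ⟨β', hβ'⟩).2
    intro h
    have := E2.injective (Subtype.ext h)
    have := congrArg Subtype.val this
    exact hne this
  · intro q hq
    have hex : ∃ a ∈ M, ∃ r, r ≤ q ∧ r ≤ a := by
      by_contra hno
      push_neg at hno
      obtain ⟨a₀, ha₀1, ha₀2⟩ := hDdense q hq
      have ha₀M : a₀ ∉ M := by
        intro hmem
        exact hno a₀ hmem a₀ ha₀1 (le_refl _)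
      have hins : insert a₀ M ∈
          {M : Set P | M ⊆ D ∧ M.Pairwise fun a b => ¬∃ r, r ≤ a ∧ r ≤ b} := by
        constructor
        · exact insert_subset ha₀2 hMD
        · intro a ha b hb hab
          rcases ha with rfl | ha
          · rcases hb with rfl | hb
            · exact absurd rfl hab
            · intro ⟨r, h1, h2⟩
              exact hno b hb r (h1.trans ha₀1) h2
          · rcases hb with rfl | hb
            · intro ⟨r, h1, h2⟩
              exact hno a ha r (h2.trans ha₀1) h1
            · exact hMpair ha hb hab
      have := hM.eq_of_superset hins (subset_insert _ _)
      exact ha₀M (this ▸ mem_insert a₀ M)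
    obtain ⟨a, haM, r, hr1, hr2⟩ := hex
    refine ⟨(E2.symm ⟨a, haM⟩).1, (E2.symm ⟨a, haM⟩).2, r, hr1, ?_⟩
    have : A (E2.symm ⟨a, haM⟩).1 = a := by
      rw [hA]
      simp only [dif_pos (E2.symm ⟨a, haM⟩).2, Subtype.coe_eta, Equiv.apply_symm_apply]
      exact (dif_pos (Set.mem_Iio.mp (E2.symm ⟨a, haM⟩).2)).trans
        (congrArg Subtype.val ((congrArg E2 (Subtype.coe_eta _ _)).trans (E2.apply_symm_apply _)))
    rw [this]
    exact hr2

/-- chosen antichain system -/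
noncomputable def ACh (l : Cardinal.{0}) (S : Set P) (γ : Ordinal) : Ordinal → P :=
  letI := Classical.propDecidable (∃ A, AProp g enum l S γ A)
  if h : ∃ A, AProp g enum l S γ A then h.choose else fun _ => Classical.arbitrary P

theorem ACh_spec
    (hκ : κ.IsRegular) (hκl : κ < l)
    (hcard : Cardinal.mk P = Cardinal.lift.{1} l)
    (hgmono : ∀ {p q : P} {α β : Ordinal}, q ≤ p → g p α β → g q α β)
    (hgfun : ∀ p α β β', g p α β → g p α β' → β = β')
    (hgtotal : ∀ p : P, ∀ α < κ.ord, ∃ q ≤ p, ∃ β < l.ord, g q α β)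
    (hgsurj : ∀ p : P, ∀ β < l.ord, ∃ q ≤ p, ∃ α < κ.ord, g q α β)
    (henum : ∀ p : P, ∃ ξ, ξ < l.ord ∧ enum ξ = p)
    (S : Set P) (hSne : S.Nonempty) (hSreg : reg S = S) (γ : Ordinal) (hγ : γ < κ.ord) :
    AProp g enum l S γ (ACh g enum l S γ) := by
  have h := AProp_exists g enum hκ hκl hcard hgmono hgfun hgtotal hgsurj henum S hSne hSreg γ hγ
  rw [ACh, dif_pos h]
  exact h.choose_spec

/-- the tree of nodes -/
noncomputable def Node (l : Cardinal.{0}) : Ordinal → (Ordinal → Ordinal) → Set P := fun γ =>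
  Ordinal.limitRecOn γ (fun _ => Set.univ)
    (fun γ₀ ih s => {q | q ≤ ACh g enum l (ih s) γ₀ (s γ₀)})
    (fun γ₀ _ ih s => reg (⋂ (δ : Ordinal), ⋂ (_ : δ < γ₀), ih δ ‹_› s))

theorem node_zero (s : Ordinal → Ordinal) : Node g enum l 0 s = Set.univ := by
  unfold Node
  rw [Ordinal.limitRecOn_zero]

theorem node_succ (γ : Ordinal) (s : Ordinal → Ordinal) :
    Node g enum l (Order.succ γ) s
      = {q | q ≤ ACh g enum l (Node g enum l γ s) γ (s γ)} := by
  unfold Node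
  rw [Ordinal.limitRecOn_succ]

theorem node_limit {γ : Ordinal} (hγ : Order.IsSuccLimit γ) (s : Ordinal → Ordinal) :
    Node g enum l γ s = reg (⋂ (δ : Ordinal), ⋂ (_ : δ < γ), Node g enum l δ s) := by
  unfold Node
  rw [Ordinal.limitRecOn_limit _ _ _ _ hγ]

theorem node_congr : ∀ γ : Ordinal, ∀ s s' : Ordinal → Ordinal,
    (∀ δ < γ, s δ = s' δ) → Node g enum l γ s = Node g enum l γ s' := by
  intro γ
  induction γ using Ordinal.limitRecOn with
  | zero =>
    intro s s' _
    rw [node_zero, node_zero]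
  | add_one γ₀ ih =>
    rw [Ordinal.add_one_eq_succ]
    intro s s' hss
    have h1 : Node g enum l γ₀ s = Node g enum l γ₀ s' :=
      ih s s' fun δ hδ => hss δ (hδ.trans (Order.lt_succ γ₀))
    have h2 : s γ₀ = s' γ₀ := hss γ₀ (Order.lt_succ γ₀)
    rw [node_succ, node_succ, h1, h2]
  | limit γ₀ hγ₀ ih =>
    intro s s' hss
    rw [node_limit g enum hγ₀ s, node_limit g enum hγ₀ s']
    have : (⋂ (δ : Ordinal), ⋂ (_ : δ < γ₀), Node g enum l δ s)
        = ⋂ (δ : Ordinal), ⋂ (_ : δ < γ₀), Node g enum l δ s' := by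
      apply Set.iInter_congr
      intro δ
      apply Set.iInter_congr
      intro hδ
      exact ih δ hδ s s' fun δ' hδ' => hss δ' (hδ'.trans hδ)
    rw [this]

theorem node_nice
    (hκ : κ.IsRegular) (hκl : κ < l)
    (hcard : Cardinal.mk P = Cardinal.lift.{1} l)
    (hsep : Separative P) (hclosed : KClosed P κ)
    (hgmono : ∀ {p q : P} {α β : Ordinal}, q ≤ p → g p α β → g q α β)
    (hgfun : ∀ p α β β', g p α β → g p α β' → β = β')
    (hgtotal : ∀ p : P, ∀ α < κ.ord, ∃ q ≤ p, ∃ β < l.ord, g q α β)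
    (hgsurj : ∀ p : P, ∀ β < l.ord, ∃ q ≤ p, ∃ α < κ.ord, g q α β)
    (henum : ∀ p : P, ∃ ξ, ξ < l.ord ∧ enum ξ = p) :
    ∀ γ : Ordinal, γ < κ.ord → ∀ s : Ordinal → Ordinal,
      ((Node g enum l γ s).Nonempty ∧ reg (Node g enum l γ s) = Node g enum l γ s) ∧
      (∀ δ ≤ γ, Node g enum l γ s ⊆ Node g enum l δ s) := by
  have spec := ACh_spec g enum hκ hκl hcard hgmono hgfun hgtotal hgsurj henum
  intro γ
  induction γ using Ordinal.limitRecOn with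
  | zero =>
    intro _ s
    rw [node_zero]
    exact ⟨⟨⟨Classical.arbitrary P, trivial⟩, reg_univ⟩,
      fun δ hδ => by rw [le_antisymm hδ zero_le, node_zero]⟩
  | add_one γ₀ ih =>
    rw [Ordinal.add_one_eq_succ]
    intro hlt s
    have hγ₀ : γ₀ < κ.ord := (Order.lt_succ γ₀).trans hlt
    obtain ⟨⟨hne₀, hreg₀⟩, hmono₀⟩ := ih hγ₀ s
    have hspec := spec (Node g enum l γ₀ s) hne₀ hreg₀ γ₀ hγ₀
    set a := ACh g enum l (Node g enum l γ₀ s) γ₀ (s γ₀) with ha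
    have haS : a ∈ Node g enum l γ₀ s := (hspec.1 (s γ₀)).1
    have hsub : Node g enum l (Order.succ γ₀) s ⊆ Node g enum l γ₀ s := by
      rw [node_succ]
      intro x hx
      exact mem_of_reg_eq hreg₀ hx haS
    constructor
    · rw [node_succ]
      exact ⟨⟨a, le_refl a⟩, reg_Iic hsep a⟩
    · intro δ hδ
      rcases eq_or_lt_of_le hδ with rfl | hlt'
      · exact Set.Subset.rfl
      · exact (hsub.trans (hmono₀ δ (Order.lt_succ_iff.mp hlt')))
  | limit γ₀ hγ₀lim ih =>
    intro hlt s
    have hicc : ∀ {p q : P}, q ≤ p → p ∈ (⋂ (δ : Ordinal), ⋂ (_ : δ < γ₀), Node g enum l δ s)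
        → q ∈ (⋂ (δ : Ordinal), ⋂ (_ : δ < γ₀), Node g enum l δ s) := by
      intro p q hq hp
      apply Set.mem_iInter.mpr
      intro δ
      apply Set.mem_iInter.mpr
      intro hδ
      have hp' : p ∈ Node g enum l δ s := Set.mem_iInter.mp (Set.mem_iInter.mp hp δ) hδ
      exact mem_of_reg_eq (ih δ hδ (hδ.trans hlt) s).1.2 hq hp'
    have hsub : ∀ δ < γ₀, Node g enum l γ₀ s ⊆ Node g enum l δ s := by
      intro δ hδ
      rw [node_limit g enum hγ₀lim s]
      have h1 : (⋂ (δ' : Ordinal), ⋂ (_ : δ' < γ₀), Node g enum l δ' s)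
          ⊆ Node g enum l δ s := fun x hx => Set.mem_iInter.mp (Set.mem_iInter.mp hx δ) hδ
      calc reg (⋂ (δ' : Ordinal), ⋂ (_ : δ' < γ₀), Node g enum l δ' s)
          ⊆ reg (Node g enum l δ s) := reg_mono h1
        _ = Node g enum l δ s := (ih δ hδ (hδ.trans hlt) s).1.2
    refine ⟨⟨?_, ?_⟩, ?_⟩
    · -- nonempty
      set f : Ordinal → P := fun δ => ACh g enum l (Node g enum l δ s) δ (s δ) with hf
      have hfmem : ∀ δ, δ < γ₀ → f δ ∈ Node g enum l δ s := by
        intro δ hδ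
        have hn := ih δ hδ (hδ.trans hlt) s
        exact ((spec (Node g enum l δ s) hn.1.1 hn.1.2 δ (hδ.trans hlt)).1 (s δ)).1
      have hfchain : ∀ α β : Ordinal, α ≤ β → β < γ₀ → f β ≤ f α := by
        intro α β hab hβ
        rcases eq_or_lt_of_le hab with rfl | hlt'
        · exact le_refl _
        · have h1 : f β ∈ Node g enum l β s := hfmem β hβ
          have h2 : Node g enum l β s ⊆ Node g enum l (Order.succ α) s :=
            (ih β hβ (hβ.trans hlt) s).2 (Order.succ α) (Order.succ_le_of_lt hlt')
          have h3 := h2 h1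
          rw [node_succ] at h3
          exact h3
      obtain ⟨b, hb⟩ := hclosed γ₀ hlt f hfchain
      refine ⟨b, ?_⟩
      rw [node_limit g enum hγ₀lim s]
      apply subset_reg hicc
      apply Set.mem_iInter.mpr
      intro δ
      apply Set.mem_iInter.mpr
      intro hδ
      exact mem_of_reg_eq (ih δ hδ (hδ.trans hlt) s).1.2 (hb δ hδ) (hfmem δ hδ)
    · rw [node_limit g enum hγ₀lim s]
      exact reg_reg _
    · intro δ hδ
      rcases eq_or_lt_of_le hδ with rfl | hlt'
      · exact Set.Subset.rfl
      · exact hsub δ hlt'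

theorem node_compare
    (hκ : κ.IsRegular) (hκl : κ < l)
    (hcard : Cardinal.mk P = Cardinal.lift.{1} l)
    (hsep : Separative P) (hclosed : KClosed P κ)
    (hgmono : ∀ {p q : P} {α β : Ordinal}, q ≤ p → g p α β → g q α β)
    (hgfun : ∀ p α β β', g p α β → g p α β' → β = β')
    (hgtotal : ∀ p : P, ∀ α < κ.ord, ∃ q ≤ p, ∃ β < l.ord, g q α β)
    (hgsurj : ∀ p : P, ∀ β < l.ord, ∃ q ≤ p, ∃ α < κ.ord, g q α β)
    (henum : ∀ p : P, ∃ ξ, ξ < l.ord ∧ enum ξ = p)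
    {γ γ' : Ordinal} (hγ : γ < κ.ord) (hγ' : γ' < κ.ord)
    {s s' : Ordinal → Ordinal} (hgood : ∀ δ < γ, s δ < l.ord) (hgood' : ∀ δ < γ', s' δ < l.ord)
    {r : P} (hr : r ∈ Node g enum l γ s) (hr' : r ∈ Node g enum l γ' s') :
    ∀ δ, δ < γ → δ < γ' → s δ = s' δ := by
  have spec := ACh_spec g enum hκ hκl hcard hgmono hgfun hgtotal hgsurj henum
  have nice := node_nice g enum hκ hκl hcard hsep hclosed hgmono hgfun hgtotal hgsurj henum
  intro δ
  induction δ using Ordinal.induction with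
  | h δ ih =>
    intro hδγ hδγ'
    have hcong : Node g enum l δ s = Node g enum l δ s' :=
      node_congr g enum δ s s' fun δ' h' => ih δ' h' (h'.trans hδγ) (h'.trans hδγ')
    by_contra hne
    have hδκ : δ < κ.ord := hδγ.trans hγ
    have hnice := nice δ hδκ s
    have hspec := spec (Node g enum l δ s) hnice.1.1 hnice.1.2 δ hδκ
    have h1 : r ∈ Node g enum l (Order.succ δ) s :=
      (nice γ hγ s).2 (Order.succ δ) (Order.succ_le_of_lt hδγ) hr
    have h2 : r ∈ Node g enum l (Order.succ δ) s' :=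
      (nice γ' hγ' s').2 (Order.succ δ) (Order.succ_le_of_lt hδγ') hr'
    rw [node_succ] at h1 h2
    rw [← hcong] at h2
    exact hspec.2.1 (s δ) (s' δ) (hgood δ hδγ) (hgood' δ hδγ') hne ⟨r, h1, h2⟩

theorem key_density
    (hκ : κ.IsRegular) (hκl : κ < l)
    (hcard : Cardinal.mk P = Cardinal.lift.{1} l)
    (hsep : Separative P) (hclosed : KClosed P κ)
    (hgmono : ∀ {p q : P} {α β : Ordinal}, q ≤ p → g p α β → g q α β)
    (hgfun : ∀ p α β β', g p α β → g p α β' → β = β')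
    (hgtotal : ∀ p : P, ∀ α < κ.ord, ∃ q ≤ p, ∃ β < l.ord, g q α β)
    (hgsurj : ∀ p : P, ∀ β < l.ord, ∃ q ≤ p, ∃ α < κ.ord, g q α β)
    (henum : ∀ p : P, ∃ ξ, ξ < l.ord ∧ enum ξ = p)
    (p : P) :
    ∃ γ, γ < κ.ord ∧ ∃ s : Ordinal → Ordinal, (∀ δ < γ, s δ < l.ord) ∧
      Node g enum l γ s ⊆ {x : P | x ≤ p} := by
  classical
  have spec := ACh_spec g enum hκ hκl hcard hgmono hgfun hgtotal hgsurj henum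
  have nice := node_nice g enum hκ hκl hcard hsep hclosed hgmono hgfun hgtotal hgsurj henum
  have hκlim : Order.IsSuccLimit κ.ord := Cardinal.isSuccLimit_ord hκ.aleph0_le
  obtain ⟨ξp, hξp, hξpe⟩ := henum p
  obtain ⟨q, hqp, α, hα, hgq⟩ := hgsurj p ξp hξp
  -- the partial branches
  set Good : Ordinal × (Ordinal → Ordinal) × (Ordinal → P) → Prop := fun t =>
    t.1 ≤ κ.ord ∧ ∀ δ < t.1, (t.2.1 δ < l.ord) ∧ (t.2.2 δ ≤ q) ∧
      (∀ δ' ≤ δ, t.2.2 δ ≤ t.2.2 δ') ∧ t.2.2 δ ∈ Node g enum l (Order.succ δ) t.2.1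
    with hGood
  set ble : {t // Good t} → {t // Good t} → Prop := fun t u => t.1.1 ≤ u.1.1 ∧
    ∀ δ < t.1.1, u.1.2.1 δ = t.1.2.1 δ ∧ u.1.2.2 δ = t.1.2.2 δ with hble
  have htrans : ∀ {a b c : {t // Good t}}, ble a b → ble b c → ble a c := by
    intro a b c h1 h2
    refine ⟨h1.1.trans h2.1, fun δ hδ => ?_⟩
    have hδb : δ < b.1.1 := lt_of_lt_of_le hδ h1.1
    exact ⟨(h2.2 δ hδb).1.trans (h1.2 δ hδ).1, (h2.2 δ hδb).2.trans (h1.2 δ hδ).2⟩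
  have base : {t // Good t} :=
    ⟨(0, fun _ => (0 : Ordinal), fun _ => q),
      ⟨zero_le, fun δ hδ => absurd hδ not_lt_zero⟩⟩
  have hbounded : ∀ c : Set {t // Good t}, IsChain ble c → ∃ ub, ∀ a ∈ c, ble a ub := by
    intro c hchain
    by_cases hc : c.Nonempty
    swap
    · exact ⟨base, fun a ha => absurd ⟨a, ha⟩ hc⟩
    · set lens := (fun t : {t // Good t} => t.1.1) '' c with hlens
      have hlensne : lens.Nonempty := hc.image _
      have hlensbdd : BddAbove lens := by
        refine ⟨κ.ord, ?_⟩
        rintro _ ⟨t, _, rfl⟩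
        exact t.2.1
      set L := sSup lens with hL
      have hLκ : L ≤ κ.ord := csSup_le hlensne (by rintro _ ⟨t, _, rfl⟩; exact t.2.1)
      set sS : Ordinal → Ordinal := fun δ =>
        if h : ∃ t, t ∈ c ∧ δ < t.1.1 then h.choose.1.2.1 δ else 0 with hsS
      set rS : Ordinal → P := fun δ =>
        if h : ∃ t, t ∈ c ∧ δ < t.1.1 then h.choose.1.2.2 δ else q with hrS
      have hcoh : ∀ t, t ∈ c → ∀ δ, δ < t.1.1 → sS δ = t.1.2.1 δ ∧ rS δ = t.1.2.2 δ := by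
        intro t ht δ hδ
        have hex : ∃ t', t' ∈ c ∧ δ < t'.1.1 := ⟨t, ht, hδ⟩
        have hmem := hex.choose_spec
        have hagree : hex.choose.1.2.1 δ = t.1.2.1 δ ∧ hex.choose.1.2.2 δ = t.1.2.2 δ := by
          rcases eq_or_ne hex.choose t with heq | hne
          · rw [heq]; exact ⟨rfl, rfl⟩
          · rcases hchain hmem.1 ht hne with h | h
            · exact ⟨((h.2 δ hmem.2).1).symm, ((h.2 δ hmem.2).2).symm⟩
            · exact ⟨(h.2 δ hδ).1, (h.2 δ hδ).2⟩
        constructor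
        · simp only [hsS]; rw [dif_pos hex]; exact hagree.1
        · simp only [hrS]; rw [dif_pos hex]; exact hagree.2
      have hGoodub : Good (L, sS, rS) := by
        refine ⟨hLκ, ?_⟩
        intro δ hδ
        have hex : ∃ t, t ∈ c ∧ δ < t.1.1 := by
          obtain ⟨o, ⟨t, ht, rfl⟩, hδo⟩ := (lt_csSup_iff hlensbdd hlensne).mp hδ
          exact ⟨t, ht, hδo⟩
        obtain ⟨t, ht, hδt⟩ := hex
        obtain ⟨hs1, hr1⟩ := hcoh t ht δ hδt
        have hG := t.2.2 δ hδt
        refine ⟨by show sS δ < l.ord; rw [hs1]; exact hG.1,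
          by show rS δ ≤ q; rw [hr1]; exact hG.2.1, ?_, ?_⟩
        · intro δ' hδ'
          have hδ't : δ' < t.1.1 := lt_of_le_of_lt hδ' hδt
          show rS δ ≤ rS δ'
          rw [hr1, (hcoh t ht δ' hδ't).2]
          exact hG.2.2.1 δ' hδ'
        · show rS δ ∈ Node g enum l (Order.succ δ) sS
          rw [hr1]
          have hcong : Node g enum l (Order.succ δ) sS = Node g enum l (Order.succ δ) t.1.2.1 := by
            apply node_congr
            intro δ'' hδ''
            have : δ'' ≤ δ := Order.lt_succ_iff.mp hδ''
            exact (hcoh t ht δ'' (lt_of_le_of_lt this hδt)).1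
          rw [hcong]
          exact hG.2.2.2
      refine ⟨⟨(L, sS, rS), hGoodub⟩, ?_⟩
      intro t ht
      constructor
      · exact le_csSup hlensbdd ⟨t, ht, rfl⟩
      · intro δ hδ
        exact hcoh t ht δ hδ
  obtain ⟨m, hmax⟩ := exists_maximal_of_chains_bounded hbounded htrans
  -- the maximal branch has full length
  have hmlen : m.1.1 = κ.ord := by
    by_contra hne
    have hmlt : m.1.1 < κ.ord := lt_of_le_of_ne m.2.1 hne
    set γm := m.1.1 with hγm
    set sm := m.1.2.1 with hsm
    set rm := m.1.2.2 with hrm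
    -- find an element of the node at level γm below everything so far
    have hstep : ∃ rnew : P, rnew ∈ Node g enum l γm sm ∧ rnew ≤ q ∧
        ∀ δ < γm, rnew ≤ rm δ := by
      rcases Ordinal.zero_or_succ_or_isSuccLimit γm with h0 | ⟨δ₀, hδ₀⟩ | hlim
      · refine ⟨q, ?_, le_refl q, ?_⟩
        · rw [h0, node_zero]; trivial
        · intro δ hδ; rw [h0] at hδ; exact absurd hδ not_lt_zero
      · replace hδ₀ := hδ₀.symm
        have hδ₀lt : δ₀ < γm := by rw [hδ₀]; exact Order.lt_succ δ₀
        have hG := m.2.2 δ₀ hδ₀lt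
        refine ⟨rm δ₀, ?_, hG.2.1, ?_⟩
        · rw [hδ₀]; exact hG.2.2.2
        · intro δ hδ
          have : δ ≤ δ₀ := by
            rw [hδ₀] at hδ; exact Order.lt_succ_iff.mp hδ
          exact hG.2.2.1 δ this
      · have hchainm : ∀ a b : Ordinal, a ≤ b → b < γm → rm b ≤ rm a := by
          intro a b hab hb
          rcases eq_or_lt_of_le hab with rfl | hlt'
          · exact le_refl _
          · exact (m.2.2 b hb).2.2.1 a hlt'.le
        obtain ⟨b, hb⟩ := hclosed γm hmlt rm hchainm
        have hbmem : ∀ δ, δ < γm → b ∈ Node g enum l δ sm := by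
          intro δ hδ
          have hδκ : δ < κ.ord := hδ.trans hmlt
          have hsδκ : Order.succ δ < κ.ord := hκlim.succ_lt hδκ
          have h1 : rm δ ∈ Node g enum l δ sm :=
            (nice (Order.succ δ) hsδκ sm).2 δ (Order.lt_succ δ).le ((m.2.2 δ hδ).2.2.2)
          exact mem_of_reg_eq (nice δ hδκ sm).1.2 (hb δ hδ) h1
        refine ⟨b, ?_, (hb 0 hlim.pos).trans (m.2.2 0 hlim.pos).2.1, hb⟩
        rw [node_limit g enum hlim sm]
        have hicc : ∀ {x y : P}, y ≤ x →
            x ∈ (⋂ (δ : Ordinal), ⋂ (_ : δ < γm), Node g enum l δ sm) →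
            y ∈ (⋂ (δ : Ordinal), ⋂ (_ : δ < γm), Node g enum l δ sm) := by
          intro x y hy hx
          apply Set.mem_iInter.mpr
          intro δ
          apply Set.mem_iInter.mpr
          intro hδ
          exact mem_of_reg_eq (nice δ (hδ.trans hmlt) sm).1.2 hy
            (Set.mem_iInter.mp (Set.mem_iInter.mp hx δ) hδ)
        apply subset_reg hicc
        apply Set.mem_iInter.mpr
        intro δ
        apply Set.mem_iInter.mpr
        intro hδ
        exact hbmem δ hδ
    obtain ⟨rnew, hrnew, hrnewq, hrnewall⟩ := hstep
    have hniceγ := nice γm hmlt sm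
    have hspecγ := spec (Node g enum l γm sm) hniceγ.1.1 hniceγ.1.2 γm hmlt
    obtain ⟨β, hβl, r', hr'1, hr'2⟩ := hspecγ.2.2 rnew hrnew
    set ext : Ordinal × (Ordinal → Ordinal) × (Ordinal → P) :=
      (Order.succ γm, Function.update sm γm β, Function.update rm γm r') with hext
    have hGoodext : Good ext := by
      refine ⟨Order.succ_le_of_lt hmlt, ?_⟩
      intro δ hδ
      simp only [hext] at hδ ⊢
      have hδle : δ ≤ γm := Order.lt_succ_iff.mp hδ
      rcases eq_or_lt_of_le hδle with rfl | hδlt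
      · refine ⟨?_, ?_, ?_, ?_⟩
        · rw [Function.update_self]; exact hβl
        · rw [Function.update_self]; exact hr'1.trans hrnewq
        · intro δ' hδ'
          rcases eq_or_lt_of_le hδ' with rfl | hδ'lt
          · exact le_refl _
          · rw [Function.update_self, Function.update_of_ne (ne_of_lt hδ'lt)]
            exact hr'1.trans (hrnewall δ' hδ'lt)
        · rw [Function.update_self, node_succ]
          have hcong : Node g enum l γm (Function.update sm γm β) = Node g enum l γm sm := by
            apply node_congr
            intro δ'' hδ''
            exact Function.update_of_ne (ne_of_lt hδ'') _ _
          rw [hcong, Function.update_self]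
          exact hr'2
      · have hG := m.2.2 δ hδlt
        have hsne : δ ≠ γm := ne_of_lt hδlt
        refine ⟨?_, ?_, ?_, ?_⟩
        · rw [Function.update_of_ne hsne]; exact hG.1
        · rw [Function.update_of_ne hsne]; exact hG.2.1
        · intro δ' hδ'
          rw [Function.update_of_ne hsne,
            Function.update_of_ne (ne_of_lt (lt_of_le_of_lt hδ' hδlt))]
          exact hG.2.2.1 δ' hδ'
        · rw [Function.update_of_ne hsne]
          have hcong : Node g enum l (Order.succ δ) (Function.update sm γm β)
              = Node g enum l (Order.succ δ) sm := by
            apply node_congr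
            intro δ'' hδ''
            have : δ'' ≤ δ := Order.lt_succ_iff.mp hδ''
            exact Function.update_of_ne (ne_of_lt (lt_of_le_of_lt this hδlt)) _ _
          rw [hcong]
          exact hG.2.2.2
    have hble : ble m ⟨ext, hGoodext⟩ := by
      constructor
      · exact (Order.lt_succ γm).le
      · intro δ hδ
        exact ⟨Function.update_of_ne (ne_of_lt hδ) _ _,
          Function.update_of_ne (ne_of_lt hδ) _ _⟩
    have := (hmax _ hble).1
    exact absurd this (not_le.mpr (by exact Order.lt_succ γm))
  -- now read off the conclusion at level α
  set sm := m.1.2.1 with hsm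
  set rm := m.1.2.2 with hrm
  have hαm : α < m.1.1 := by rw [hmlen]; exact hα
  have hG := m.2.2 α hαm
  have hra : rm α ≤ ACh g enum l (Node g enum l α sm) α (sm α) := by
    have := hG.2.2.2
    rw [node_succ] at this
    exact this
  have hnα := nice α hα sm
  have hspecα := spec (Node g enum l α sm) hnα.1.1 hnα.1.2 α hα
  obtain ⟨haS, ξa, hξa, hga, hdich⟩ := hspecα.1 (sm α)
  have h1 : g (rm α) α ξa := hgmono hra hga
  have h2 : g (rm α) α ξp := hgmono hG.2.1 hgq
  have hξeq : ξa = ξp := hgfun _ _ _ _ h1 h2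
  have henumξa : enum ξa = p := by rw [hξeq, hξpe]
  rcases hdich with hle | hnc
  · refine ⟨Order.succ α, hκlim.succ_lt hα, sm, ?_, ?_⟩
    · intro δ hδ
      have hδα : δ ≤ α := Order.lt_succ_iff.mp hδ
      have : δ < m.1.1 := by rw [hmlen]; exact lt_of_le_of_lt hδα hα
      exact (m.2.2 δ this).1
    · rw [node_succ]
      intro x hx
      exact le_trans hx (le_trans hle (le_of_eq henumξa))
  · exfalso
    exact hnc ⟨rm α, hra, by rw [henumξa]; exact hG.2.1.trans hqp⟩

end WithNE

end Main

theorem col_dom_bound {κ l : Cardinal.{0}} (hκ : κ.IsRegular) (f : Col κ l) :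
    ∃ γ, γ < κ.ord ∧ ∀ pr ∈ f.1, pr.1 < γ := by
  classical
  have hκlim : Order.IsSuccLimit κ.ord := Cardinal.isSuccLimit_ord hκ.aleph0_le
  have hT : #↥f.1 < Cardinal.lift.{1} κ := f.2.2.2
  obtain ⟨ν, hν, hνe⟩ := Cardinal.lt_lift_iff.mp hT
  have hmk : Cardinal.lift.{1} #ν.out = Cardinal.lift.{0} #↥f.1 := by
    rw [Cardinal.mk_out, Cardinal.lift_id']
    exact hνe
  obtain ⟨E⟩ := Cardinal.lift_mk_eq'.mp hmk
  have hbound : ∀ i : ν.out, ((E i).1.1 : Ordinal) < κ.ord := fun i => (f.2.1 (E i).1 (E i).2).1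
  have hsup : (⨆ i, ((E i).1.1 : Ordinal)) < κ.ord := by
    apply Ordinal.iSup_lt_ord _ hbound
    rw [Cardinal.mk_out, hκ.cof_eq]
    exact hν
  refine ⟨Order.succ (⨆ i, ((E i).1.1 : Ordinal)), hκlim.succ_lt hsup, ?_⟩
  intro pr hpr
  have heq : pr = (E (E.symm ⟨pr, hpr⟩)).1 := by rw [Equiv.apply_symm_apply]
  have hle : pr.1 ≤ ⨆ i, ((E i).1.1 : Ordinal) := by
    calc pr.1 = (E (E.symm ⟨pr, hpr⟩)).1.1 := by rw [← heq]
    _ ≤ _ := le_ciSup (Ordinal.bddAbove_range _) _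
  exact lt_of_le_of_lt hle (Order.lt_succ _)

end CollapseAbs



open CollapseAbs in
/-- Suppose `κ` is regular, `κ < λ`, and `ℙ` is a separative atomless `κ`-closed poset of
cardinality `λ` which forces the existence of a surjection from `κ` onto `λ` (witnessed by a
name `ǧ`, given by the relation `g q α β` = "`q ⊩ ǧ(α̌) = β̌`", forced to be a surjection
`κ → λ`).  Then `ro(ℙ) ≅ ro(Col(κ,{λ}))`, i.e. `ℙ` is forcing equivalent to the poset of
partial functions from `κ` to `λ` of size `< κ`. -/
theorem collapse_absorption
    (κ l : Cardinal.{0}) (hκ : κ.IsRegular) (hκl : κ < l)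
    (P : Type 1) [Preorder P]
    (hcard : Cardinal.mk P = Cardinal.lift.{1} l)
    (hsep : Separative P) (hatom : Atomless P) (hclosed : KClosed P κ)
    (g : P → Ordinal → Ordinal → Prop)
    (hgmono : ∀ {p q : P} {α β : Ordinal}, q ≤ p → g p α β → g q α β)
    (hgfun : ∀ p α β β', g p α β → g p α β' → β = β')
    (hgbound : ∀ p α β, g p α β → α < κ.ord ∧ β < l.ord)
    (hgtotal : ∀ p : P, ∀ α < κ.ord, ∃ q ≤ p, ∃ β < l.ord, g q α β)
    (hgsurj : ∀ p : P, ∀ β < l.ord, ∃ q ≤ p, ∃ α < κ.ord, g q α β) :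
    ForcingEquiv P (Col κ l) := by
  classical
  have hl0c : (0 : Cardinal.{0}) < l := lt_of_lt_of_le hκ.pos hκl.le
  have hl0 : (0 : Ordinal) < l.ord := by
    rw [← Cardinal.ord_zero]; exact Cardinal.ord_lt_ord.mpr hl0c
  have hIiol : #(Set.Iio l.ord) = Cardinal.lift.{1} l := by
    rw [Ordinal.mk_Iio_ordinal, Cardinal.card_ord]
  haveI hPne : Nonempty P := by
    apply Cardinal.mk_ne_zero_iff.mp
    rw [hcard]
    simp only [ne_eq, Cardinal.lift_eq_zero]
    exact ne_of_gt hl0c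
  obtain ⟨E⟩ := Cardinal.eq.mp (hIiol.trans hcard.symm)
  set enum : Ordinal → P := fun ξ => if h : ξ < l.ord then E ⟨ξ, h⟩ else E ⟨0, hl0⟩
    with henumdef
  have henum : ∀ p : P, ∃ ξ, ξ < l.ord ∧ enum ξ = p := by
    intro p
    refine ⟨(E.symm p).1, (E.symm p).2, ?_⟩
    show (if h : (E.symm p).1 < l.ord then E ⟨(E.symm p).1, h⟩ else E ⟨0, hl0⟩) = p
    rw [dif_pos (Set.mem_Iio.mp (E.symm p).2)]
    exact (congrArg E (Subtype.coe_eta _ _)).trans (E.apply_symm_apply p)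
  have spec := ACh_spec g enum hκ hκl hcard hgmono hgfun hgtotal hgsurj henum
  have nice := node_nice g enum hκ hκl hcard hsep hclosed hgmono hgfun hgtotal hgsurj henum
  set Ucol : Col κ l → Set P := fun f =>
    {x | ∃ γ, γ < κ.ord ∧ ∃ s : Ordinal → Ordinal, (∀ δ < γ, s δ < l.ord) ∧
      (∀ pr ∈ f.1, pr.1 < γ ∧ s pr.1 = pr.2) ∧ x ∈ Node g enum l γ s} with hUcoldef
  have hUdc : ∀ (f : Col κ l) {x y : P}, y ≤ x → x ∈ Ucol f → y ∈ Ucol f := by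
    rintro f x y hyx ⟨γ, hγ, s, hgood, hpair, hx⟩
    exact ⟨γ, hγ, s, hgood, hpair, mem_of_reg_eq (nice γ hγ s).1.2 hyx hx⟩
  have hUne : ∀ f : Col κ l, (Ucol f).Nonempty := by
    intro f
    obtain ⟨γ, hγ, hbound⟩ := col_dom_bound hκ f
    set s : Ordinal → Ordinal := fun δ => if h : ∃ β, (δ, β) ∈ f.1 then h.choose else 0
      with hsdef
    have hsgood : ∀ δ, δ < γ → s δ < l.ord := by
      intro δ _
      show (if h : ∃ β, (δ, β) ∈ f.1 then h.choose else 0) < l.ord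
      by_cases h : ∃ β, (δ, β) ∈ f.1
      · rw [dif_pos h]; exact (f.2.1 (δ, h.choose) h.choose_spec).2
      · rw [dif_neg h]; exact hl0
    have hpair : ∀ pr ∈ f.1, pr.1 < γ ∧ s pr.1 = pr.2 := by
      intro pr hpr
      refine ⟨hbound pr hpr, ?_⟩
      have hex : ∃ β, (pr.1, β) ∈ f.1 := ⟨pr.2, by simpa using hpr⟩
      show (if h : ∃ β, (pr.1, β) ∈ f.1 then h.choose else 0) = pr.2
      rw [dif_pos hex]
      exact f.2.2.1 _ hex.choose_spec pr hpr rfl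
    obtain ⟨x, hx⟩ := (nice γ hγ s).1.1
    exact ⟨x, γ, hγ, s, hsgood, hpair, hx⟩
  have hUmono : ∀ f f' : Col κ l, f ≤ f' → Ucol f ⊆ Ucol f' := by
    rintro f f' hle x ⟨γ, hγ, s, hgood, hpair, hx⟩
    exact ⟨γ, hγ, s, hgood, fun pr hpr => hpair pr (hle hpr), hx⟩
  refine ⟨{S : Set P // S.Nonempty ∧ reg S = S},
    { le := fun S T => S.1 ⊆ T.1
      le_refl := fun S => Set.Subset.rfl
      le_trans := fun S T U h1 h2 => h1.trans h2 },
    fun p => ⟨{q | q ≤ p}, ⟨p, le_refl p⟩, reg_Iic hsep p⟩,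
    fun f => ⟨reg (Ucol f),
      (hUne f).mono (subset_reg (fun h hx => hUdc f h hx)), reg_reg _⟩,
    ⟨?_, ?_, ?_⟩, ⟨?_, ?_, ?_⟩⟩
  · -- e₁ monotone
    intro p q hpq x hx
    exact hx.trans hpq
  · -- e₁ compatibility
    intro p q
    constructor
    · rintro ⟨r, h1, h2⟩
      exact ⟨⟨{x | x ≤ r}, ⟨r, le_refl r⟩, reg_Iic hsep r⟩,
        fun x hx => hx.trans h1, fun x hx => hx.trans h2⟩
    · rintro ⟨S, h1, h2⟩
      obtain ⟨x, hx⟩ := S.2.1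
      exact ⟨x, h1 hx, h2 hx⟩
  · -- e₁ density
    rintro ⟨S, hSne, hSreg⟩
    obtain ⟨x, hx⟩ := hSne
    exact ⟨x, fun y hy => mem_of_reg_eq hSreg hy hx⟩
  · -- e₂ monotone
    intro f f' hff'
    exact reg_mono (hUmono f f' hff')
  · -- e₂ compatibility
    intro f f'
    constructor
    · rintro ⟨r, h1, h2⟩
      exact ⟨⟨reg (Ucol r),
          (hUne r).mono (subset_reg (fun h hx => hUdc r h hx)), reg_reg _⟩,
        reg_mono (hUmono r f h1), reg_mono (hUmono r f' h2)⟩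
    · rintro ⟨S, hS1, hS2⟩
      obtain ⟨x, hx⟩ := S.2.1
      obtain ⟨r₁, hr₁x, hr₁U⟩ := hS1 hx x (le_refl x)
      obtain ⟨r₂, hr₂, hr₂U⟩ := reg_dc hr₁x (hS2 hx) r₁ (le_refl r₁)
      obtain ⟨γ1, hγ1, s1, hgood1, hpair1, hmem1⟩ := hr₁U
      obtain ⟨γ2, hγ2, s2, hgood2, hpair2, hmem2⟩ := hr₂U
      have hmem1' : r₂ ∈ Node g enum l γ1 s1 :=
        mem_of_reg_eq (nice γ1 hγ1 s1).1.2 hr₂ hmem1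
      have hagree := node_compare g enum hκ hκl hcard hsep hclosed hgmono hgfun
        hgtotal hgsurj henum hγ1 hγ2 hgood1 hgood2 hmem1' hmem2
      refine ⟨⟨f.1 ∪ f'.1, ?_, ?_, ?_⟩, ?_, ?_⟩
      · rintro pr (hpr | hpr)
        exacts [f.2.1 pr hpr, f'.2.1 pr hpr]
      · rintro pr hpr qr hqr heq
        rcases hpr with hpr | hpr <;> rcases hqr with hqr | hqr
        · exact f.2.2.1 pr hpr qr hqr heq
        · have h1 := hpair1 pr hpr
          have h2 := hpair2 qr hqr
          calc pr.2 = s1 pr.1 := h1.2.symm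
          _ = s2 pr.1 := hagree pr.1 h1.1 (by rw [heq]; exact h2.1)
          _ = s2 qr.1 := by rw [heq]
          _ = qr.2 := h2.2
        · have h1 := hpair1 qr hqr
          have h2 := hpair2 pr hpr
          calc pr.2 = s2 pr.1 := h2.2.symm
          _ = s1 pr.1 := (hagree pr.1 (by rw [heq]; exact h1.1) h2.1).symm
          _ = s1 qr.1 := by rw [heq]
          _ = qr.2 := h1.2
        · exact f'.2.2.1 pr hpr qr hqr heq
      · apply lt_of_le_of_lt (Cardinal.mk_union_le _ _)
        exact Cardinal.add_lt_of_lt (Cardinal.aleph0_le_lift.mpr hκ.aleph0_le)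
          f.2.2.2 f'.2.2.2
      · show f.1 ⊆ f.1 ∪ f'.1
        exact Set.subset_union_left
      · show f'.1 ⊆ f.1 ∪ f'.1
        exact Set.subset_union_right
  · -- e₂ density
    rintro ⟨S, hSne, hSreg⟩
    obtain ⟨x, hx⟩ := hSne
    obtain ⟨γ, hγ, s, hgood, hsub⟩ := key_density g enum hκ hκl hcard hsep hclosed
      hgmono hgfun hgtotal hgsurj henum x
    have hfcard : #↥{pr : Ordinal × Ordinal | pr.1 < γ ∧ pr.2 = s pr.1}
        < Cardinal.lift.{1} κ := by
      have hinj : Function.Injective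
          (fun x : ↥{pr : Ordinal × Ordinal | pr.1 < γ ∧ pr.2 = s pr.1} =>
            (⟨x.1.1, x.2.1⟩ : ↥(Set.Iio γ))) := by
        intro x y h
        simp only [Subtype.mk.injEq] at h
        replace h : x.1.1 = y.1.1 := congrArg Subtype.val h
        apply Subtype.ext
        apply Prod.ext h
        rw [x.2.2, y.2.2, h]
      calc #↥{pr : Ordinal × Ordinal | pr.1 < γ ∧ pr.2 = s pr.1}
          ≤ #↥(Set.Iio γ) := Cardinal.mk_le_of_injective hinj
      _ = Cardinal.lift.{1} γ.card := Ordinal.mk_Iio_ordinal γ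
      _ < Cardinal.lift.{1} κ := Cardinal.lift_lt.mpr (Cardinal.lt_ord.mp hγ)
    set fcol : Col κ l := ⟨{pr : Ordinal × Ordinal | pr.1 < γ ∧ pr.2 = s pr.1},
      fun pr hpr => ⟨hpr.1.trans hγ, hpr.2 ▸ hgood pr.1 hpr.1⟩,
      fun pr hpr qr hqr heq => by rw [hpr.2, hqr.2, heq],
      hfcard⟩ with hfcol
    refine ⟨fcol, ?_⟩
    have hsubU : Ucol fcol ⊆ Node g enum l γ s := by
      rintro y ⟨γ', hγ', s', hgood', hpair', hy⟩
      have hγγ' : γ ≤ γ' := by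
        by_contra hcon
        push_neg at hcon
        exact absurd (hpair' (γ', s γ') ⟨hcon, rfl⟩).1 (lt_irrefl γ')
      have hagree : ∀ δ < γ, s' δ = s δ := fun δ hδ => (hpair' (δ, s δ) ⟨hδ, rfl⟩).2
      have h1 : y ∈ Node g enum l γ s' := (nice γ' hγ' s').2 γ hγγ' hy
      rwa [node_congr g enum γ s' s hagree] at h1
    show reg (Ucol fcol) ⊆ S
    calc reg (Ucol fcol) ⊆ reg {q | q ≤ x} := reg_mono (hsubU.trans hsub)
    _ = {q | q ≤ x} := reg_Iic hsep x
    _ ⊆ S := fun y hy => mem_of_reg_eq hSreg hy hx
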